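/- Let (X;G) be a faithful group representation, P a regular ramified m×n matrix over (X;G), and α a deflationary equivalence contained in θ_P; consider the induced action of J((X;G);P) on V_α. For [r,g,μ], [s,h,β] ∈ J((X;G);P) with μ ≠ β, the transformations of V_α induced by [r,g,μ] and [s,h,β] have the same kernel if and only if row P_μ is proportional to row P_β. In particular, if the representation (V_α; J((X;G);P)) is faithful, then P is right reductive. -/
import Mathlib


/-- The action of the monomial matrix (triple) `t = [r, g, λ]` on the vector `a = i_x`
over a ramified matrix `P`:  `[r,g,λ](i_x) = r_{g(P(λ,i)(x))}`. -/
def ramAct {X G : Type*} [Group G] (φ : G →* Equiv.Perm X) {m n : ℕ}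
    (P : Fin m → Fin n → X → X) (t : Fin n × G × Fin m) (a : Fin n × X) : Fin n × X :=
  (t.1, φ t.2.1 (P t.2.2 a.1 a.2))

/-- Let `(X;G)` be a faithful group representation, `P` a regular ramified `m×n` matrix
over `(X;G)`, and `α` a deflationary equivalence contained in `θ_P`.  Then for triples
`[r,g,μ]` and `[s,h,β]` with `μ ≠ β`, the induced transformations of `V_α` have the same
kernel iff the rows `P_μ` and `P_β` are proportional.  In particular, if the induced
representation `(V_α; J((X;G);P))` is faithful, then `P` is right reductive. -/
theorem ramified_kernels_and_proportional_rows {X G : Type*} [Fintype X] [Group G]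
    [Fintype G] (φ : G →* Equiv.Perm X) (hφ : Function.Injective φ)
    {m n : ℕ} (P : Fin m → Fin n → X → X)
    (hram : ∀ lam i, (∃ g, P lam i = ⇑(φ g)) ∨ ¬ Function.Bijective (P lam i))
    (hregrow : ∀ lam, ∃ i g, P lam i = ⇑(φ g))
    (hregcol : ∀ i, ∃ lam g, P lam i = ⇑(φ g))
    (α : (Fin n × X) → (Fin n × X) → Prop) (hα : Equivalence α)
    (hdefl : ∀ a b, α a b → ∀ t : Fin n × G × Fin m, ramAct φ P t a = ramAct φ P t b)
    (hαθ : ∀ a b, α a b → ∀ lam, P lam a.1 a.2 = P lam b.1 b.2) :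
    (∀ (r s : Fin n) (g h : G) (μ β : Fin m), μ ≠ β →
      ((∀ a b : Fin n × X,
          (α (ramAct φ P (r, g, μ) a) (ramAct φ P (r, g, μ) b) ↔
            α (ramAct φ P (s, h, β) a) (ramAct φ P (s, h, β) b))) ↔
        ∃ g0 : G, ∀ i, ⇑(φ g0) ∘ P μ i = P β i)) ∧
    ((∀ t t' : Fin n × G × Fin m,
        (∀ a, α (ramAct φ P t a) (ramAct φ P t' a)) → t = t') →
      ∀ μ β : Fin m, (∃ g0 : G, ∀ i, ⇑(φ g0) ∘ P μ i = P β i) → μ = β) := by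
  -- Key: the kernel of `[r,g,μ]` on `V_α` is exactly equality of `P μ`-values.
  have key : ∀ (r : Fin n) (g : G) (μ : Fin m) (a b : Fin n × X),
      α (ramAct φ P (r, g, μ) a) (ramAct φ P (r, g, μ) b) ↔
        P μ a.1 a.2 = P μ b.1 b.2 := by
    intro r g μ a b
    constructor
    · intro hab
      obtain ⟨lam, g', hg'⟩ := hregcol r
      have h1 := hαθ _ _ hab lam
      simp only [ramAct, hg'] at h1
      exact (φ g).injective ((φ g').injective h1)
    · intro hab
      have h2 : ramAct φ P (r, g, μ) a = ramAct φ P (r, g, μ) b := by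
        simp [ramAct, hab]
      rw [h2]
      exact hα.refl _
  constructor
  · intro r s g h μ β hμβ
    constructor
    · intro hker
      have fib : ∀ a b : Fin n × X, P μ a.1 a.2 = P μ b.1 b.2 ↔ P β a.1 a.2 = P β b.1 b.2 := by
        intro a b
        rw [← key r g μ a b, ← key s h β a b]
        exact hker a b
      obtain ⟨i₀, g₁, hg₁⟩ := hregrow μ
      obtain ⟨i₁, g₂, hg₂⟩ := hregrow β
      -- `P β i₀` is bijective.
      have hbij : Function.Bijective (P β i₀) := by
        constructor
        · intro x y hxy
          have := (fib (i₀, x) (i₀, y)).2 hxy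
          simp only [hg₁] at this
          exact (φ g₁).injective this
        · intro z
          set a : Fin n × X := (i₁, (φ g₂)⁻¹ z) with ha
          have haz : P β a.1 a.2 = z := by
            simp [ha, hg₂]
          refine ⟨(φ g₁)⁻¹ (P μ a.1 a.2), ?_⟩
          have hF : P μ (i₀ : Fin n) ((φ g₁)⁻¹ (P μ a.1 a.2)) = P μ a.1 a.2 := by
            simp [hg₁]
          have := (fib (i₀, (φ g₁)⁻¹ (P μ a.1 a.2)) a).1 hF
          rw [this, haz]
      obtain ⟨g₃, hg₃⟩ := (hram β i₀).resolve_right (by simpa using hbij)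
      refine ⟨g₃ * g₁⁻¹, fun i => funext fun x => ?_⟩
      have hF : P μ (i₀ : Fin n) ((φ g₁)⁻¹ (P μ i x)) = P μ (i : Fin n) x := by
        simp [hg₁]
      have := (fib (i₀, (φ g₁)⁻¹ (P μ i x)) (i, x)).1 hF
      rw [hg₃] at this
      simpa [Function.comp, map_mul] using this
    · rintro ⟨g0, hg0⟩ a b
      rw [key, key]
      constructor
      · intro hab
        have := congrFun (hg0 a.1) a.2
        have hb := congrFun (hg0 b.1) b.2
        rw [← this, ← hb]
        simp [hab]
      · intro hab
        have ha := congrFun (hg0 a.1) a.2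
        have hb := congrFun (hg0 b.1) b.2
        simp only [Function.comp_apply] at ha hb
        rw [← ha, ← hb] at hab
        exact (φ g0).injective hab
  · intro hf μ β ⟨g0, hg0⟩
    obtain ⟨i, g', _⟩ := hregrow μ
    have heq : (i, g0, μ) = ((i, 1, β) : Fin n × G × Fin m) := by
      apply hf
      intro a
      have : ramAct φ P (i, g0, μ) a = ramAct φ P (i, 1, β) a := by
        simp only [ramAct, map_one, Equiv.Perm.coe_one, id_eq]
        exact congrArg (i, ·) (congrFun (hg0 a.1) a.2)
      rw [this]
      exact hα.refl _
    exact congrArg (·.2.2) heq
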